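/- A split extension N →k G →e H with splitting s in Frm∧ (where k is the kernel of e, e the cokernel of k, and e ∘ s = id) is weakly Schreier (every g ∈ G equals k(n) ∧ s(h) for some n ∈ N, h ∈ H) if and only if s is right adjoint to e. -/

import Mathlib

section WSAux

universe uu vv

noncomputable instance WSAux.instSupSet {α : Type uu} [SupSet α] :
    SupSet (ULift.{vv} α) :=
  ⟨fun s => ULift.up (sSup (ULift.down '' s))⟩

noncomputable instance WSAux.instInfSet {α : Type uu} [InfSet α] :
    InfSet (ULift.{vv} α) :=
  ⟨fun s => ULift.up (sInf (ULift.down '' s))⟩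

instance WSAux.instHImp {α : Type uu} [HImp α] : HImp (ULift.{vv} α) :=
  ⟨fun a b => ULift.up (a.down ⇨ b.down)⟩

noncomputable instance WSAux.instFrame {α : Type uu} [Order.Frame α] :
    Order.Frame (ULift.{vv} α) :=
  Function.Injective.frame ULift.down ULift.down_injective Iff.rfl Iff.rfl
    (fun _ _ => rfl) (fun _ _ => rfl)
    (fun _ => sSup_image) (fun _ => sInf_image)
    rfl rfl (fun _ => rfl) (fun _ _ => rfl)

end WSAux

/-- A split extension `N -k→ G -e→ H` with splitting `s` in `Frm∧` (where `k`
is the kernel of `e`, `e` the cokernel of `k`, and `e ∘ s = id`) is weakly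
Schreier (every `g ∈ G` equals `k n ⊓ s h` for some `n`, `h`) if and only if
`s` is right adjoint to `e`. -/
theorem weakly_schreier_iff_adjoint
    {N G H : Type*} [Order.Frame N] [Order.Frame G] [Order.Frame H]
    (k : N → G) (e : G → H) (s : H → G)
    (hk_inf : ∀ a b, k (a ⊓ b) = k a ⊓ k b) (hk_top : k ⊤ = ⊤)
    (he_inf : ∀ a b, e (a ⊓ b) = e a ⊓ e b) (he_top : e ⊤ = ⊤)
    (hs_inf : ∀ a b, s (a ⊓ b) = s a ⊓ s b) (hs_top : s ⊤ = ⊤)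
    (hek : ∀ n : N, e (k n) = ⊤)
    (hker : ∀ (X : Type*) [Order.Frame X] (f : X → G),
      (∀ a b, f (a ⊓ b) = f a ⊓ f b) → f ⊤ = ⊤ → (∀ x : X, e (f x) = ⊤) →
      ∃! f' : X → N, ∀ x : X, k (f' x) = f x)
    (hcoker : ∀ (X : Type*) [Order.Frame X] (g : G → X),
      (∀ a b, g (a ⊓ b) = g a ⊓ g b) → g ⊤ = ⊤ → (∀ n : N, g (k n) = ⊤) →
      ∃! g' : H → X,
        (∀ a b : H, g' (a ⊓ b) = g' a ⊓ g' b) ∧ g' ⊤ = ⊤ ∧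
          ∀ x : G, g' (e x) = g x)
    (hsec : ∀ h : H, e (s h) = h) :
    (∀ g : G, ∃ (n : N) (h : H), g = k n ⊓ s h) ↔
      (∀ (g : G) (h : H), e g ≤ h ↔ g ≤ s h) := by
  classical
  -- monotonicity from meet preservation
  have kmono : ∀ {a b : N}, a ≤ b → k a ≤ k b := by
    intro a b hab
    have : k (a ⊓ b) = k a ⊓ k b := hk_inf a b
    rw [inf_eq_left.mpr hab] at this
    exact this ▸ inf_le_right
  have emono : ∀ {a b : G}, a ≤ b → e a ≤ e b := by
    intro a b hab
    have : e (a ⊓ b) = e a ⊓ e b := he_inf a b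
    rw [inf_eq_left.mpr hab] at this
    exact this ▸ inf_le_right
  have smono : ∀ {a b : H}, a ≤ b → s a ≤ s b := by
    intro a b hab
    have : s (a ⊓ b) = s a ⊓ s b := hs_inf a b
    rw [inf_eq_left.mpr hab] at this
    exact this ▸ inf_le_right
  constructor
  · -- weakly Schreier → adjoint
    intro hws g h
    constructor
    · intro hle
      obtain ⟨n, h', hg⟩ := hws g
      have heg : e g = h' := by
        rw [hg, he_inf, hek, hsec, top_inf_eq]
      have : g ≤ s h' := hg ▸ inf_le_right
      exact this.trans (smono (heg ▸ hle))
    · intro hle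
      have := emono hle
      rwa [hsec] at this
  · -- adjoint → weakly Schreier
    intro hadj g
    have hg : g ≤ s (e g) := (hadj g (e g)).mp le_rfl
    set u := k ⊥ with hu
    -- kernel trick: get n with k n = u ⊔ g
    have hetop : e (u ⊔ g) = ⊤ :=
      top_le_iff.mp ((hek ⊥).symm.le.trans (emono le_sup_left))
    obtain ⟨f', hf', -⟩ := hker (ULift Prop)
      (fun p => if p.down then (⊤ : G) else u ⊔ g)
      (fun a b => by
        have hab : (a ⊓ b).down = (a.down ∧ b.down) := rfl
        by_cases ha : a.down <;> by_cases hb : b.down <;>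
          simp [hab, ha, hb])
      (by simp [ULift.down_top])
      (fun p => by
        by_cases hp : p.down <;> simp only [hp, if_true, if_false] <;>
          [exact he_top;
           exact top_le_iff.mp ((hek ⊥).symm.le.trans (emono le_sup_left))])
    have hkn : k (f' (ULift.up False)) = u ⊔ g := by
      have := hf' (ULift.up False)
      simpa using this
    -- cokernel trick (pointwise, with c := s (e g)): s (e g) ⊓ u ≤ g
    have husg : u ⊓ s (e g) ≤ g := by
      set c := s (e g) with hc
      obtain ⟨q', ⟨-, -, hq'e⟩, -⟩ := hcoker (ULift Prop)
        (fun x => ULift.up (c ⊓ u ≤ x))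
        (fun a b => by
          have : ((ULift.up (c ⊓ u ≤ a) : ULift Prop) ⊓ ULift.up (c ⊓ u ≤ b)) =
              ULift.up ((c ⊓ u ≤ a) ∧ (c ⊓ u ≤ b)) := rfl
          rw [this]
          exact congrArg ULift.up (propext le_inf_iff.symm).symm)
        (by
          have : (⊤ : ULift Prop) = ULift.up True := rfl
          rw [this]
          exact congrArg ULift.up (by simp))
        (fun n => by
          have : (⊤ : ULift Prop) = ULift.up True := rfl
          rw [this]
          exact congrArg ULift.up
            (by simp [(inf_le_right.trans (kmono bot_le) : c ⊓ u ≤ k n)]))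
      have h1 := congrArg ULift.down (hq'e g)
      have h2 := congrArg ULift.down (hq'e (s (e g)))
      rw [hsec] at h2
      have heqv : (c ⊓ u ≤ g) = (c ⊓ u ≤ s (e g)) := h1.symm.trans h2
      rw [inf_comm]
      exact heqv ▸ (inf_le_left : c ⊓ u ≤ c)
    refine ⟨f' (ULift.up False), e g, ?_⟩
    rw [hkn, inf_sup_right, inf_eq_left.mpr hg]
    exact (sup_eq_right.mpr husg).symm
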